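/- Let f : ℝ^{n×n} → [0,∞) be rank-one convex and satisfy f(F) ≤ C(1+|F|^p) for some p ∈ [1,∞) and C > 0. Then there is a constant C' > 0 such that |f(F) - f(G)| ≤ C'(1 + |F|^{p-1} + |G|^{p-1})|F - G| for all F, G with F - G of rank at most one. -/

import Mathlib

/-- Frobenius norm of a real square matrix. -/
noncomputable def frob {n : ℕ} (M : Matrix (Fin n) (Fin n) ℝ) : ℝ :=
  Real.sqrt (∑ i, ∑ j, (M i j) ^ 2)


attribute [local instance] Matrix.frobeniusNormedAddCommGroup Matrix.frobeniusNormedSpace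

lemma frob_eq_norm {n : ℕ} (M : Matrix (Fin n) (Fin n) ℝ) : frob M = ‖M‖ := by
  rw [Matrix.frobenius_norm_def, frob, Real.sqrt_eq_rpow]
  congr 1
  simp [Real.norm_eq_abs, Real.rpow_two, sq_abs]

lemma rank_le_one_vecMulVec {n : ℕ} (M : Matrix (Fin n) (Fin n) ℝ) (h : M.rank ≤ 1) :
    ∃ a b : Fin n → ℝ, M = Matrix.vecMulVec a b := by
  rw [Matrix.rank] at h
  obtain ⟨⟨v, hv⟩, hw⟩ := finrank_le_one_iff.mp h
  have hcol : ∀ j, ∃ c : ℝ, ∀ i, M i j = c * v i := by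
    intro j
    have hmem : M.mulVec (Pi.single j 1) ∈ LinearMap.range M.mulVecLin :=
      ⟨Pi.single j 1, rfl⟩
    obtain ⟨c, hc⟩ := hw ⟨_, hmem⟩
    refine ⟨c, fun i => ?_⟩
    have h2 : c • v = M.mulVec (Pi.single j 1) := congrArg Subtype.val hc
    have := congrArg (fun x => x i) h2
    simp only [Pi.smul_apply, smul_eq_mul, Matrix.mulVec_single, mul_one, Matrix.col_apply, MulOpposite.op_one, one_smul] at this
    exact this.symm
  choose b hb using hcol
  exact ⟨v, b, by ext i j; simp [Matrix.vecMulVec_apply, hb j i, mul_comm]⟩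

lemma slope_aux (g : ℝ → ℝ) (hg : ConvexOn ℝ Set.univ g) (hnn : ∀ t, 0 ≤ g t)
    {s : ℝ} (hs : 0 < s) : g 1 - g 0 ≤ g (1 + s) / s := by
  have h1s : (0:ℝ) < 1 + s := by linarith
  have h := hg.2 (Set.mem_univ (0:ℝ)) (Set.mem_univ (1+s))
    (show (0:ℝ) ≤ s/(1+s) by positivity) (show (0:ℝ) ≤ 1/(1+s) by positivity)
    (show s/(1+s) + 1/(1+s) = 1 by field_simp; ring)
  have hpt : (s/(1+s)) • (0:ℝ) + (1/(1+s)) • (1+s) = 1 := by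
    simp only [smul_eq_mul, mul_zero, zero_add]
    field_simp
  rw [hpt] at h
  simp only [smul_eq_mul] at h
  rw [le_div_iff₀ hs]
  have h' := mul_le_mul_of_nonneg_left h h1s.le
  have e1 : (1+s) * (s/(1+s) * g 0 + 1/(1+s) * g (1+s)) = s * g 0 + g (1+s) := by
    field_simp
  rw [e1] at h'
  nlinarith [hnn 1, hnn 0]

lemma frob_nonneg {n : ℕ} (M : Matrix (Fin n) (Fin n) ℝ) : 0 ≤ frob M :=
  Real.sqrt_nonneg _

lemma one_sided {n : ℕ} (f : Matrix (Fin n) (Fin n) ℝ → ℝ) (p C : ℝ)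
    (hp : 1 ≤ p) (hC : 0 < C)
    (hconv : ∀ (A : Matrix (Fin n) (Fin n) ℝ) (a b : Fin n → ℝ),
      ConvexOn ℝ Set.univ (fun t : ℝ => f (A + t • Matrix.vecMulVec a b)))
    (hnn : ∀ F, 0 ≤ f F)
    (hgrowth : ∀ F, f F ≤ C * (1 + frob F ^ p))
    (F G : Matrix (Fin n) (Fin n) ℝ) (a b : Fin n → ℝ)
    (hab : F - G = Matrix.vecMulVec a b) :
    f F - f G ≤ (C * (1 + (2:ℝ)^p) * 3^(p-1)) *
      (1 + frob F ^ (p - 1) + frob G ^ (p - 1)) * frob (F - G) := by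
  have hq : (0:ℝ) ≤ p - 1 := by linarith
  have hNF := frob_nonneg F
  have hNG := frob_nonneg G
  by_cases hFG : F = G
  · subst hFG
    have h0 : frob (F - F) = 0 := by rw [sub_self, frob_eq_norm]; simp
    rw [h0]; simp
  · have hR : 0 < frob (F - G) := by
      rw [frob_eq_norm]; exact norm_pos_iff.mpr (sub_ne_zero.mpr hFG)
    set NF := frob F with hNFdef
    set NG := frob G with hNGdef
    set R := frob (F - G) with hRdef
    set T : ℝ := 1 + NF + NG with hTdef
    have hT1 : (1:ℝ) ≤ T := by simp only [hTdef]; linarith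
    have hT0 : (0:ℝ) < T := by linarith
    set s := T / R with hsdef
    have hs : 0 < s := div_pos hT0 hR
    have key := slope_aux _ (hconv G a b) (fun t => hnn _) hs
    have e0 : G + (0:ℝ) • Matrix.vecMulVec a b = G := by simp
    have e1 : G + (1:ℝ) • Matrix.vecMulVec a b = F := by
      rw [one_smul, ← hab]; abel
    have e2 : G + (1+s) • Matrix.vecMulVec a b = F + s • (F - G) := by
      rw [← hab, add_smul, one_smul]; abel
    simp only [e0, e1, e2] at key
    set H := F + s • (F - G) with hHdef
    have hH : frob H ≤ 2 * T := by
      have h1 : frob H ≤ NF + s * R := by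
        rw [hHdef, frob_eq_norm, hNFdef, hRdef, frob_eq_norm, frob_eq_norm]
        calc ‖F + s • (F - G)‖ ≤ ‖F‖ + ‖s • (F - G)‖ := norm_add_le _ _
          _ = ‖F‖ + s * ‖F - G‖ := by
              rw [norm_smul, Real.norm_eq_abs, abs_of_pos hs]
      have h2 : s * R = T := div_mul_cancel₀ T hR.ne'
      rw [h2] at h1
      linarith
    have hTp1 : (1:ℝ) ≤ T ^ p := Real.one_le_rpow hT1 (by linarith)
    have hHp : frob H ^ p ≤ (2:ℝ)^p * T^p := by
      calc frob H ^ p ≤ (2*T) ^ p :=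
            Real.rpow_le_rpow (frob_nonneg H) hH (by linarith)
        _ = (2:ℝ)^p * T^p := Real.mul_rpow (by norm_num) hT0.le
    have h2p : (0:ℝ) < (2:ℝ)^p := Real.rpow_pos_of_pos (by norm_num) p
    have hfH : f H ≤ C * (1 + (2:ℝ)^p) * T^p := by
      have := hgrowth H
      nlinarith [hC.le, hTp1, hHp, h2p.le]
    have hkey2 : f H / s ≤ C * (1 + (2:ℝ)^p) * T^(p-1) * R := by
      rw [div_le_iff₀ hs, hsdef]
      have hTT0 : T^(p-1) * T = T ^ p := by
        nth_rewrite 2 [← Real.rpow_one T]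
        rw [← Real.rpow_add hT0]
        ring_nf
      have hTT : T^(p-1) * R * (T / R) = T ^ p := by
        rw [show T^(p-1) * R * (T/R) = T^(p-1) * T * (R / R) by ring,
          div_self hR.ne', mul_one, hTT0]
      calc f H ≤ C * (1 + (2:ℝ)^p) * T^p := hfH
        _ = C * (1 + (2:ℝ)^p) * T^(p-1) * R * (T / R) := by
            rw [mul_assoc (C * (1 + (2:ℝ)^p)), mul_assoc (C * (1 + (2:ℝ)^p)), hTT]
    have hT3 : T^(p-1) ≤ (3:ℝ)^(p-1) * (1 + NF^(p-1) + NG^(p-1)) := by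
      set m : ℝ := max 1 (max NF NG) with hmdef
      have hm1 : (1:ℝ) ≤ m := le_max_left _ _
      have hNFm : NF ≤ m := le_trans (le_max_left _ _) (le_max_right _ _)
      have hNGm : NG ≤ m := le_trans (le_max_right _ _) (le_max_right _ _)
      have hTm : T ≤ 3 * m := by simp only [hTdef]; linarith
      have h1 : T^(p-1) ≤ (3*m)^(p-1) :=
        Real.rpow_le_rpow hT0.le hTm hq
      have h2 : (3*m:ℝ)^(p-1) = (3:ℝ)^(p-1) * m^(p-1) :=
        Real.mul_rpow (by norm_num) (by linarith)
      have h3 : m^(p-1) ≤ 1 + NF^(p-1) + NG^(p-1) := by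
        have hNFq : (0:ℝ) ≤ NF^(p-1) := Real.rpow_nonneg hNF _
        have hNGq : (0:ℝ) ≤ NG^(p-1) := Real.rpow_nonneg hNG _
        rcases max_choice 1 (max NF NG) with h | h
        · rw [← hmdef] at h; rw [h, Real.one_rpow]; linarith
        · rw [← hmdef] at h
          rcases max_choice NF NG with h' | h'
          · rw [h, h']
            have : (1:ℝ) = (1:ℝ)^(p-1) := (Real.one_rpow _).symm
            linarith
          · rw [h, h']
            linarith
      have h30 : (0:ℝ) < (3:ℝ)^(p-1) := Real.rpow_pos_of_pos (by norm_num) _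
      calc T^(p-1) ≤ (3:ℝ)^(p-1) * m^(p-1) := by rw [← h2]; exact h1
        _ ≤ (3:ℝ)^(p-1) * (1 + NF^(p-1) + NG^(p-1)) := by nlinarith
    have hfin : C * (1 + (2:ℝ)^p) * T^(p-1) * R ≤
        (C * (1 + (2:ℝ)^p) * 3^(p-1)) * (1 + NF^(p-1) + NG^(p-1)) * R := by
      have hc0 : (0:ℝ) ≤ C * (1 + (2:ℝ)^p) := by nlinarith
      have := mul_le_mul_of_nonneg_left hT3 hc0
      nlinarith [hR.le]
    linarith
/-- A rank-one convex function with `p`-growth satisfies a local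
`p`-Lipschitz estimate along rank-one directions. -/
theorem stmt_1 {n : ℕ} (f : Matrix (Fin n) (Fin n) ℝ → ℝ) (p C : ℝ)
    (hp : 1 ≤ p) (hC : 0 < C)
    (hconv : ∀ (A : Matrix (Fin n) (Fin n) ℝ) (a b : Fin n → ℝ),
      ConvexOn ℝ Set.univ (fun t : ℝ => f (A + t • Matrix.vecMulVec a b)))
    (hnn : ∀ F, 0 ≤ f F)
    (hgrowth : ∀ F, f F ≤ C * (1 + frob F ^ p)) :
    ∃ C' > 0, ∀ F G : Matrix (Fin n) (Fin n) ℝ, (F - G).rank ≤ 1 →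
      |f F - f G| ≤ C' * (1 + frob F ^ (p - 1) + frob G ^ (p - 1)) * frob (F - G) := by
  have h2p : (0:ℝ) < (2:ℝ)^p := Real.rpow_pos_of_pos (by norm_num) p
  have h3p : (0:ℝ) < (3:ℝ)^(p-1) := Real.rpow_pos_of_pos (by norm_num) _
  refine ⟨C * (1 + (2:ℝ)^p) * 3^(p-1), by positivity, ?_⟩
  intro F G hr
  obtain ⟨a, b, hab⟩ := rank_le_one_vecMulVec _ hr
  have hab' : G - F = Matrix.vecMulVec (-a) b := by
    have : G - F = -(F - G) := by abel
    rw [this, hab]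
    ext i j
    simp [Matrix.vecMulVec_apply]
  rw [abs_sub_le_iff]
  constructor
  · exact one_sided f p C hp hC hconv hnn hgrowth F G a b hab
  · have h2 := one_sided f p C hp hC hconv hnn hgrowth G F (-a) b hab'
    have e : frob (G - F) = frob (F - G) := by
      rw [frob_eq_norm, frob_eq_norm, norm_sub_rev]
    rw [e] at h2
    calc f G - f F ≤ (C * (1 + (2:ℝ)^p) * 3^(p-1)) *
          (1 + frob G ^ (p-1) + frob F ^ (p-1)) * frob (F - G) := h2
      _ = (C * (1 + (2:ℝ)^p) * 3^(p-1)) *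
          (1 + frob F ^ (p-1) + frob G ^ (p-1)) * frob (F - G) := by ring
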